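/- Growth rate of an endomorphism of a free product restricted to a factor: Let H be a group generated by a finite symmetric set T, let F be a free group on a finite set X, and let G = H ∗ F be their free product (coproduct of groups), with canonical inclusions inl : H → G and inr : F → G. Equip G with the finite symmetric generating set S consisting of the elements inl(t) for t ∈ T together with inr(x) and inr(x)⁻¹ for x ∈ X. If A : G → G and B : H → H are group endomorphisms with A ∘ inl = inl ∘ B, then γ_B ≤ γ_A, where the growth rates are computed with respect to T and S respectively. (This is the algebraic core of Theorem 5.2: π₁ of a compression body is the free product of π₁ of its interior boundary with a free group, and the interior boundary inclusion admits a retract.) -/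

import Mathlib

open Filter
open scoped ENNReal

/-- The word length of `g` with respect to a generating set `S`: the least `n`
such that `g` is a product of `n` elements of `S` (so the identity has length `0`). -/
noncomputable def wordLength {G : Type*} [Group G] (S : Set G) (g : G) : ℕ :=
  sInf {n : ℕ | ∃ l : List G, l.length = n ∧ (∀ x ∈ l, x ∈ S) ∧ l.prod = g}

/-- The growth rate of a group endomorphism `A : G → G` with respect to a
generating set `S`:
`γ_A = sup_{g ∈ G} limsup_{n → ∞} (1/n)·log(max(ℓ_S(Aⁿ(g)), 1))`, valued in `[0, ∞]`. -/
noncomputable def growthRate {G : Type*} [Group G] (S : Set G) (A : G →* G) : ℝ≥0∞ :=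
  ⨆ g : G, Filter.atTop.limsup fun n : ℕ =>
    ENNReal.ofReal (Real.log ((max (wordLength S ((⇑A)^[n] g)) 1 : ℕ) : ℝ) / (n : ℝ))

/-- Removing identity letters: from a list with entries in `T ∪ {1}` we get a
shorter list with entries in `T` and the same product. -/
lemma exists_shorter_list {G : Type*} [Group G] (T : Set G) :
    ∀ l : List G, (∀ x ∈ l, x ∈ T ∪ {1}) →
      ∃ l' : List G, l'.length ≤ l.length ∧ (∀ x ∈ l', x ∈ T) ∧ l'.prod = l.prod := by
  intro l
  induction l with
  | nil => exact fun _ => ⟨[], le_rfl, by simp, rfl⟩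
  | cons a t ih =>
    intro h
    obtain ⟨l', hlen, hmem, hprod⟩ := ih fun x hx => h x (List.mem_cons_of_mem _ hx)
    rcases h a List.mem_cons_self with ha | ha
    · exact ⟨a :: l', by simpa using Nat.succ_le_succ hlen,
        fun x hx => by rcases List.mem_cons.1 hx with rfl | hx; exacts [ha, hmem x hx],
        by simp [hprod]⟩
    · refine ⟨l', hlen.trans (Nat.le_succ _), hmem, ?_⟩
      simp only [Set.mem_singleton_iff] at ha
      simp [hprod, ha]

lemma wordLength_le_of_list {G : Type*} [Group G] {S : Set G} {g : G} {l : List G}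
    (hmem : ∀ x ∈ l, x ∈ S) (hprod : l.prod = g) : wordLength S g ≤ l.length :=
  Nat.sInf_le ⟨l, rfl, hmem, hprod⟩

open Monoid in
/-- Growth rate of an endomorphism of a free product `G = H ∗ F` (with `F` a free
group on a finite set `X`) restricted to the factor `H`: if `A ∘ inl = inl ∘ B`,
then `γ_B ≤ γ_A`, where `G` carries the generating set consisting of `inl(t)` for
`t ∈ T` together with `inr(x)` and `inr(x)⁻¹` for `x ∈ X`. -/
theorem growthRate_le_of_freeProduct_factor
    {H X : Type*} [Group H] [Fintype X]
    (T : Set H) (hTfin : T.Finite) (hTsym : T⁻¹ = T) (hTgen : Subgroup.closure T = ⊤)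
    (S : Set (Coprod H (FreeGroup X)))
    (hS : S = (⇑(Coprod.inl : H →* Coprod H (FreeGroup X)) '' T) ∪
        (⋃ x : X, {Coprod.inr (FreeGroup.of x), (Coprod.inr (FreeGroup.of x) :
          Coprod H (FreeGroup X))⁻¹}))
    (A : Coprod H (FreeGroup X) →* Coprod H (FreeGroup X)) (B : H →* H)
    (hcomm : A.comp Coprod.inl = (Coprod.inl : H →* Coprod H (FreeGroup X)).comp B) :
    growthRate T B ≤ growthRate S A := by
  classical
  -- the retraction
  set r : Coprod H (FreeGroup X) →* H := Coprod.lift (MonoidHom.id H) 1 with hr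
  have hrinl : ∀ h : H, r (Coprod.inl h) = h := fun h => Coprod.lift_apply_inl _ _ h
  have hrinr : ∀ f : FreeGroup X, r (Coprod.inr f) = 1 := fun f => Coprod.lift_apply_inr _ _ f
  -- r maps letters of S into T ∪ {1}
  have hletters : ∀ s ∈ S, r s ∈ T ∪ {1} := by
    intro s hs
    rw [hS] at hs
    rcases hs with ⟨t, ht, rfl⟩ | hs
    · exact Or.inl (by rwa [hrinl])
    · simp only [Set.mem_iUnion, Set.mem_insert_iff, Set.mem_singleton_iff] at hs
      obtain ⟨x, hx | hx⟩ := hs <;> subst hx <;>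
        simp [hrinr, Or.inr (Set.mem_singleton _)]
  -- S is symmetric
  have hSsym : S⁻¹ ⊆ S := by
    intro s hs
    rw [Set.mem_inv, hS] at hs
    rw [hS]
    rcases hs with ⟨t, ht, hts⟩ | hs
    · refine Or.inl ⟨t⁻¹, ?_, ?_⟩
      · rw [← hTsym]; exact Set.inv_mem_inv.2 ht
      · rw [map_inv, hts, inv_inv]
    · simp only [Set.mem_iUnion, Set.mem_insert_iff, Set.mem_singleton_iff] at hs
      obtain ⟨x, hx | hx⟩ := hs
      · refine Or.inr (Set.mem_iUnion.2 ⟨x, ?_⟩)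
        have : s = (Coprod.inr (FreeGroup.of x) : Coprod H (FreeGroup X))⁻¹ := by
          rw [← hx, inv_inv]
        simp [this]
      · refine Or.inr (Set.mem_iUnion.2 ⟨x, ?_⟩)
        have : s = (Coprod.inr (FreeGroup.of x) : Coprod H (FreeGroup X)) := by
          rw [← inv_inv s, hx, inv_inv]
        simp [this]
  -- S generates G as a subgroup
  have hSgen : Subgroup.closure S = ⊤ := by
    rw [eq_top_iff]
    rintro g -
    induction g using Coprod.induction_on with
    | inl h =>
      have : h ∈ Subgroup.closure T := hTgen ▸ Subgroup.mem_top h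
      have := Subgroup.mem_map_of_mem (Coprod.inl : H →* Coprod H (FreeGroup X)) this
      rw [MonoidHom.map_closure] at this
      exact Subgroup.closure_mono (by rw [hS]; exact Set.subset_union_left) this
    | inr f =>
      have : f ∈ Subgroup.closure (Set.range (FreeGroup.of : X → FreeGroup X)) := by
        rw [FreeGroup.closure_range_of]; trivial
      have := Subgroup.mem_map_of_mem (Coprod.inr : FreeGroup X →* Coprod H (FreeGroup X)) this
      rw [MonoidHom.map_closure] at this
      refine Subgroup.closure_mono ?_ this
      rintro s ⟨f', ⟨x, rfl⟩, rfl⟩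
      rw [hS]
      exact Or.inr (Set.mem_iUnion.2 ⟨x, Or.inl rfl⟩)
    | mul x y hx hy => exact mul_mem hx hy
  -- every element of G is a product of a list of elements of S
  have hSlist : ∀ g : Coprod H (FreeGroup X), ∃ l : List (Coprod H (FreeGroup X)), (∀ x ∈ l, x ∈ S) ∧ l.prod = g := by
    intro g
    have : g ∈ Submonoid.closure (S ∪ S⁻¹) := by
      rw [← Subgroup.closure_toSubmonoid, hSgen]; trivial
    have : g ∈ Submonoid.closure S := by
      rwa [Set.union_eq_self_of_subset_right hSsym] at this
    exact Submonoid.exists_list_of_mem_closure this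
  -- key inequality: wordLength T (r g) ≤ wordLength S g
  have hkey : ∀ g : Coprod H (FreeGroup X), wordLength T (r g) ≤ wordLength S g := by
    intro g
    obtain ⟨l, hmem, hprod⟩ := hSlist g
    have hne : {n : ℕ | ∃ l : List (Coprod H (FreeGroup X)), l.length = n ∧ (∀ x ∈ l, x ∈ S) ∧ l.prod = g}.Nonempty :=
      ⟨l.length, l, rfl, hmem, hprod⟩
    obtain ⟨l₀, hlen₀, hmem₀, hprod₀⟩ := Nat.sInf_mem hne
    obtain ⟨l', hlen', hmem', hprod'⟩ := exists_shorter_list T (l₀.map r)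
      (by intro x hx; obtain ⟨y, hy, rfl⟩ := List.mem_map.1 hx; exact hletters y (hmem₀ y hy))
    have : l'.prod = r g := by rw [hprod', ← map_list_prod, hprod₀]
    calc wordLength T (r g) ≤ l'.length := wordLength_le_of_list hmem' this
      _ ≤ (l₀.map r).length := hlen'
      _ = wordLength S g := by unfold wordLength; rw [List.length_map, hlen₀]
  -- A^[n] (inl h) = inl (B^[n] h)
  have hAB : ∀ (n : ℕ) (h : H), (⇑A)^[n] (Coprod.inl h) = Coprod.inl ((⇑B)^[n] h) := by
    intro n
    induction n with
    | zero => intro h; rfl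
    | succ n ih =>
      intro h
      rw [Function.iterate_succ_apply', Function.iterate_succ_apply', ih]
      exact DFunLike.congr_fun hcomm ((⇑B)^[n] h)
  -- conclude
  rw [growthRate, growthRate]
  refine iSup_le fun h => ?_
  refine le_trans ?_ (le_iSup _ (Coprod.inl h : Coprod H (FreeGroup X)))
  refine Filter.limsup_le_limsup (Filter.Eventually.of_forall fun n => ?_)
  dsimp only
  rw [hAB n h]
  have hw : wordLength T ((⇑B)^[n] h) ≤ wordLength S (Coprod.inl ((⇑B)^[n] h)) := by
    have := hkey (Coprod.inl ((⇑B)^[n] h))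
    rwa [hrinl] at this
  refine ENNReal.ofReal_le_ofReal ?_
  have h1 : (1 : ℝ) ≤ ((max (wordLength T ((⇑B)^[n] h)) 1 : ℕ) : ℝ) := by
    exact_mod_cast Nat.one_le_iff_ne_zero.2 (by simp)
  have hlog : Real.log ((max (wordLength T ((⇑B)^[n] h)) 1 : ℕ) : ℝ)
      ≤ Real.log ((max (wordLength S (Coprod.inl ((⇑B)^[n] h))) 1 : ℕ) : ℝ) := by
    apply Real.log_le_log (by linarith)
    exact_mod_cast max_le_max hw le_rfl
  exact div_le_div_of_nonneg_right hlog (by positivity)
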